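/- Let α₀ = a + bi and δ = c + di be coprime Gaussian integers with gcd(c,d) = 1, let Δ = a·d − b·c, and let p be a rational prime. Then p divides some element of the sequence α_k = α₀ + k·δ (k ∈ ℤ) in ℤ[i] if and only if p divides Δ. -/

import Mathlib

theorem rational_prime_in_divisor_set (α₀ δ : GaussianInt) (h : IsCoprime α₀ δ)
    (hδ : Int.gcd δ.re δ.im = 1) (p : ℕ) (hp : p.Prime) :
    (∃ k : ℤ, (p : GaussianInt) ∣ α₀ + (k : GaussianInt) * δ) ↔
      (p : ℤ) ∣ α₀.re * δ.im - α₀.im * δ.re := by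
  haveI : Fact p.Prime := ⟨hp⟩
  have hcast : ∀ z : GaussianInt, (p : GaussianInt) ∣ z ↔
      (p : ℤ) ∣ z.re ∧ (p : ℤ) ∣ z.im := by
    intro z
    have := Zsqrtd.intCast_dvd (p : ℤ) z
    simpa using this
  have hre : ∀ k : ℤ, (α₀ + (k : GaussianInt) * δ).re = α₀.re + k * δ.re := by
    intro k; simp [Zsqrtd.re_mul]
  have him : ∀ k : ℤ, (α₀ + (k : GaussianInt) * δ).im = α₀.im + k * δ.im := by
    intro k; simp [Zsqrtd.im_mul]
  constructor
  · rintro ⟨k, hk⟩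
    rw [hcast] at hk
    obtain ⟨h1, h2⟩ := hk
    rw [hre] at h1
    rw [him] at h2
    have key : α₀.re * δ.im - α₀.im * δ.re =
        δ.im * (α₀.re + k * δ.re) - δ.re * (α₀.im + k * δ.im) := by ring
    rw [key]
    exact dvd_sub (h1.mul_left _) (h2.mul_left _)
  · intro hΔ
    have hΔ' : (α₀.re * δ.im : ZMod p) = α₀.im * δ.re := by
      have : ((α₀.re * δ.im - α₀.im * δ.re : ℤ) : ZMod p) = 0 := by
        rwa [ZMod.intCast_zmod_eq_zero_iff_dvd]
      push_cast at this
      linear_combination this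
    have hnot : ¬((p : ℤ) ∣ δ.re ∧ (p : ℤ) ∣ δ.im) := by
      rintro ⟨h1, h2⟩
      have hg : (p : ℤ) ∣ (Int.gcd δ.re δ.im : ℤ) := Int.dvd_coe_gcd h1 h2
      rw [hδ] at hg
      have : p ∣ 1 := by exact_mod_cast hg
      exact hp.one_lt.ne' (Nat.dvd_one.mp this)
    suffices hsuff : ∃ k : ℤ, (p : ℤ) ∣ α₀.re + k * δ.re ∧ (p : ℤ) ∣ α₀.im + k * δ.im by
      obtain ⟨k, h1, h2⟩ := hsuff
      exact ⟨k, (hcast _).mpr ⟨by rwa [hre], by rwa [him]⟩⟩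
    by_cases hc : (p : ℤ) ∣ δ.re
    · -- then p ∤ δ.im
      have hd : ¬ (p : ℤ) ∣ δ.im := fun hd => hnot ⟨hc, hd⟩
      have hdz : (δ.im : ZMod p) ≠ 0 := by
        rwa [Ne, ZMod.intCast_zmod_eq_zero_iff_dvd]
      have hcz : (δ.re : ZMod p) = 0 := by
        rwa [ZMod.intCast_zmod_eq_zero_iff_dvd]
      refine ⟨((-α₀.im * (δ.im : ZMod p)⁻¹).val : ℤ), ?_, ?_⟩
      · rw [← ZMod.intCast_zmod_eq_zero_iff_dvd]
        push_cast [ZMod.natCast_val, ZMod.cast_id]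
        rw [hcz]
        -- α₀.re = 0 in ZMod p since α₀.re * δ.im = α₀.im * δ.re = α₀.im * 0 = 0
        have : (α₀.re : ZMod p) * δ.im = 0 := by rw [hΔ', hcz]; ring
        rcases mul_eq_zero.mp this with h0 | h0
        · rw [h0]; ring
        · exact absurd h0 hdz
      · rw [← ZMod.intCast_zmod_eq_zero_iff_dvd]
        push_cast [ZMod.natCast_val, ZMod.cast_id]
        field_simp
        ring
    · have hcz : (δ.re : ZMod p) ≠ 0 := by
        rwa [Ne, ZMod.intCast_zmod_eq_zero_iff_dvd]
      refine ⟨((-α₀.re * (δ.re : ZMod p)⁻¹).val : ℤ), ?_, ?_⟩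
      · rw [← ZMod.intCast_zmod_eq_zero_iff_dvd]
        push_cast [ZMod.natCast_val, ZMod.cast_id]
        field_simp
        ring
      · rw [← ZMod.intCast_zmod_eq_zero_iff_dvd]
        push_cast [ZMod.natCast_val, ZMod.cast_id]
        field_simp
        linear_combination -hΔ'
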